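/- Let α, β be commutative ring elements and define P_n by P_0(x)=1, P_1(x)=x-(α+β), P_n(x)=(x-α)P_{n-1}(x)-βx P_{n-2}(x). Then for each n, P_n(x) = ∑_{k=0}^n d_{n,k} x^k where d_{n,k} is the coefficient of x^n in ((1-βx)/(1+αx)) · (x(1-βx)/(1+αx))^k, i.e., the coefficient array of the P_n is the Riordan array ((1-βx)/(1+αx), x(1-βx)/(1+αx)). -/

import Mathlib

open PowerSeries

private lemma lb_inv {R : Type*} [CommRing R] (α : R) :
    (1 + C α * X) * invOfUnit (1 + C α * X) 1 = 1 := by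
  apply mul_invOfUnit
  simp

private lemma lb_key {R : Type*} [CommRing R] (α β : R) (s : R⟦X⟧) (n : ℕ) :
    coeff (n + 1) (((1 - C β * X) * invOfUnit (1 + C α * X) 1) * s) =
      coeff (n + 1) ((1 - C β * X) * s)
        - α * coeff n (((1 - C β * X) * invOfUnit (1 + C α * X) 1) * s) := by
  have h2 : (1 - C β * X) * s =
      ((1 - C β * X) * invOfUnit (1 + C α * X) 1) * s
        + C α * (X * (((1 - C β * X) * invOfUnit (1 + C α * X) 1) * s)) := by
    linear_combination (-((1 - C β * X) * s)) * lb_inv (R := R) α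
  have := congrArg (coeff (n + 1)) h2
  rw [map_add, coeff_C_mul, coeff_succ_X_mul] at this
  linear_combination -this

private lemma lb_fact {R : Type*} [CommRing R] (β : R) (s : R⟦X⟧) (n : ℕ) :
    coeff (n + 1) ((1 - C β * X) * s) = coeff (n + 1) s - β * coeff n s := by
  have h2 : (1 - C β * X) * s = s - C β * (X * s) := by ring
  have := congrArg (coeff (n + 1)) h2
  rwa [map_sub, coeff_C_mul, coeff_succ_X_mul] at this

private lemma lb_tri {R : Type*} [CommRing R] (α β : R) (n k : ℕ) (h : n < k) :
    coeff n (((1 - C β * X) * invOfUnit (1 + C α * X) 1) *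
      (X * (1 - C β * X) * invOfUnit (1 + C α * X) 1) ^ k) = 0 := by
  have hd : (X : R⟦X⟧) ^ k ∣ ((1 - C β * X) * invOfUnit (1 + C α * X) 1) *
      (X * (1 - C β * X) * invOfUnit (1 + C α * X) 1) ^ k :=
    ⟨((1 - C β * X) * invOfUnit (1 + C α * X) 1) *
      ((1 - C β * X) ^ k * invOfUnit (1 + C α * X) 1 ^ k),
      by rw [mul_pow, mul_pow]; ring⟩
  exact X_pow_dvd_iff.mp hd n h

private lemma lb_const {R : Type*} [CommRing R] (α β : R) :
    coeff 0 ((1 - C β * X) * invOfUnit (1 + C α * X) 1) = 1 := by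
  simp [coeff_zero_eq_constantCoeff, constantCoeff_invOfUnit]

theorem laurent_biorthogonal_coeff_array {R : Type*} [CommRing R] (α β : R)
    (P : ℕ → Polynomial R)
    (hP0 : P 0 = 1)
    (hP1 : P 1 = Polynomial.X - Polynomial.C (α + β))
    (hPrec : ∀ n, P (n + 2) =
      (Polynomial.X - Polynomial.C α) * P (n + 1) - Polynomial.C β * Polynomial.X * P n) :
    ∀ n k : ℕ, (P n).coeff k =
      PowerSeries.coeff n
        (((1 - PowerSeries.C β * PowerSeries.X) *
            PowerSeries.invOfUnit (1 + PowerSeries.C α * PowerSeries.X) 1) *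
          (PowerSeries.X * (1 - PowerSeries.C β * PowerSeries.X) *
            PowerSeries.invOfUnit (1 + PowerSeries.C α * PowerSeries.X) 1) ^ k) := by
  set G : R⟦X⟧ := (1 - C β * X) * invOfUnit (1 + C α * X) 1 with hG
  set F : R⟦X⟧ := X * (1 - C β * X) * invOfUnit (1 + C α * X) 1 with hF
  have hFXG : F = X * G := by rw [hF, hG, mul_assoc]
  have hconst : coeff 0 G = 1 := by rw [hG]; exact lb_const α β
  intro n
  induction n using Nat.twoStepInduction with
  | zero =>
    intro k
    rw [hP0]
    match k with
    | 0 =>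
      simpa [Polynomial.coeff_one] using hconst.symm
    | k + 1 =>
      have h := lb_tri (R := R) α β 0 (k + 1) (Nat.succ_pos k)
      rw [← hG, ← hF] at h
      rw [h, Polynomial.coeff_one]
      simp
  | one =>
    intro k
    rw [hP1]
    match k with
    | 0 =>
      rw [pow_zero, mul_one]
      have h1 := lb_key (R := R) α β 1 0
      simp only [mul_one, ← hG] at h1
      have h2 : coeff 1 (1 - C β * X : R⟦X⟧) = -β := by simp
      simp only [Polynomial.coeff_sub, Polynomial.coeff_X_zero, Polynomial.coeff_C_zero]
      rw [h1, h2, hconst]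
      ring
    | 1 =>
      rw [pow_one]
      have h1 := lb_key (R := R) α β F 0
      rw [← hG] at h1
      have htri := lb_tri (R := R) α β 0 1 one_pos
      rw [← hG, ← hF, pow_one] at htri
      have h2 := lb_fact (R := R) β F 0
      have h3 : coeff 1 F = 1 := by rw [hFXG, coeff_succ_X_mul, hconst]
      have h4 : coeff 0 F = 0 := by
        rw [hFXG]
        simp [coeff_zero_eq_constantCoeff]
      simp only [Polynomial.coeff_sub, Polynomial.coeff_X_one, Polynomial.coeff_C,
        if_neg one_ne_zero]
      rw [h1, h2, h3, h4, htri]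
      ring
    | k + 2 =>
      have h := lb_tri (R := R) α β 1 (k + 2) (by omega)
      rw [← hG, ← hF] at h
      rw [h]
      simp [Polynomial.coeff_X, Polynomial.coeff_C]
  | more n ihn ihn1 =>
    intro k
    rw [hPrec n]
    match k with
    | 0 =>
      rw [pow_zero, mul_one]
      have h1 := lb_key (R := R) α β 1 (n + 1)
      simp only [mul_one, ← hG] at h1
      have h2 : coeff (n + 2) (1 - C β * X : R⟦X⟧) = 0 := by
        simp [coeff_one]
      have h3 := ihn1 0
      rw [pow_zero, mul_one] at h3
      simp only [Polynomial.coeff_sub, Polynomial.mul_coeff_zero, Polynomial.coeff_X_zero,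
        Polynomial.coeff_C_zero]
      rw [h1, h2, ← h3]
      ring
    | k + 1 =>
      have h1 := lb_key (R := R) α β (F ^ (k + 1)) (n + 1)
      rw [← hG] at h1
      have h2 := lb_fact (R := R) β (F ^ (k + 1)) (n + 1)
      have hX : F ^ (k + 1) = X * (G * F ^ k) := by rw [hFXG]; ring
      have h3 : coeff (n + 2) (F ^ (k + 1)) = coeff (n + 1) (G * F ^ k) := by
        rw [hX, coeff_succ_X_mul]
      have h4 : coeff (n + 1) (F ^ (k + 1)) = coeff n (G * F ^ k) := by
        rw [hX, coeff_succ_X_mul]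
      have e1 := ihn k
      have e2 := ihn1 k
      have e3 := ihn1 (k + 1)
      have hL : ((Polynomial.X - Polynomial.C α) * P (n + 1)
          - Polynomial.C β * Polynomial.X * P n).coeff (k + 1)
          = (P (n + 1)).coeff k - α * (P (n + 1)).coeff (k + 1) - β * (P n).coeff k := by
        rw [sub_mul, mul_assoc]
        simp [Polynomial.coeff_X_mul, Polynomial.coeff_C_mul]
      rw [hL, h1, h2, h3, h4]
      linear_combination e2 - α * e3 - β * e1
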